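/- Let A be upper triangular, row-standardized with columnwise diagonal dominance (a_{ℓℓ}>a_{kℓ} for k≠ℓ). Then for 1≤i<j≤d−1: a_{ij}² = (σ²_{M_{i,j+1,...,d}} − σ²_{M_{j+1,...,d}}) − (σ²_{M_{i,j,...,d}} − σ²_{M_{j,...,d}}), where σ²_{M_I} = Σ_{ℓ∈V} max_{k∈I} a_{kℓ}². Consequently the row-vectorized vector A² of squared entries is a linear transformation A² = T S_M of the vector S_M of d(d+1)/2 squared scalings, for an explicit integer matrix T with entries in {−1,0,1}. -/

import Mathlib

lemma real_biSup_eq {n : ℕ} (s : Finset (Fin (n+1))) (f : Fin (n+1) → ℝ)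
    (hf : ∀ k, 0 ≤ f k) (x : ℝ) (hx : 0 ≤ x)
    (hub : ∀ k ∈ s, f k ≤ x)
    (hwit : (∃ k ∈ s, f k = x) ∨ x = 0) :
    ⨆ k ∈ s, f k = x := by
  have hg : ∀ k, (⨆ _ : k ∈ s, f k) ≤ x := by
    intro k; exact Real.iSup_le (fun hk => hub k hk) hx
  have hbdd : BddAbove (Set.range fun k => ⨆ _ : k ∈ s, f k) := by
    refine ⟨x, ?_⟩; rintro _ ⟨k, rfl⟩; exact hg k
  have hg0 : ∀ k, 0 ≤ (⨆ _ : k ∈ s, f k) := by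
    intro k
    by_cases hk : k ∈ s
    · rw [ciSup_pos hk]; exact hf k
    · have : IsEmpty (k ∈ s) := ⟨hk⟩
      simp [Real.iSup_of_isEmpty]
  refine le_antisymm (Real.iSup_le hg hx) ?_
  rcases hwit with ⟨k, hk, hfk⟩ | rfl
  · calc x = f k := hfk.symm
      _ = ⨆ _ : k ∈ s, f k := (ciSup_pos (f := fun _ => f k) hk).symm
      _ ≤ _ := le_ciSup hbdd k
  · calc (0:ℝ) ≤ ⨆ _ : (0 : Fin (n+1)) ∈ s, f 0 := hg0 0
      _ ≤ _ := le_ciSup hbdd 0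

section
variable {n : ℕ} {A : Fin (n + 1) → Fin (n + 1) → ℝ}
  (hnn : ∀ i j, 0 ≤ A i j)
  (hdiag : ∀ ℓ k, k ≠ ℓ → A k ℓ < A ℓ ℓ)
  (hut : ∀ i j : Fin (n + 1), j < i → A i j = 0)

include hnn hdiag in
lemma sq_le_diag (k ℓ : Fin (n+1)) : (A k ℓ)^2 ≤ (A ℓ ℓ)^2 := by
  rcases eq_or_ne k ℓ with rfl | h
  · exact le_refl _
  · exact pow_le_pow_left₀ (hnn k ℓ) (le_of_lt (hdiag ℓ k h)) 2

include hnn hdiag hut in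
lemma supIns {i j : Fin (n+1)} (hij : i ≤ j) (ℓ : Fin (n+1)) :
    (⨆ k ∈ insert i (Finset.Ioi j), (A k ℓ)^2)
      = if j < ℓ then (A ℓ ℓ)^2 else (A i ℓ)^2 := by
  split_ifs with h
  · exact real_biSup_eq _ _ (fun k => sq_nonneg _) _ (sq_nonneg _)
      (fun k _ => sq_le_diag hnn hdiag k ℓ)
      (Or.inl ⟨ℓ, Finset.mem_insert_of_mem (Finset.mem_Ioi.2 h), rfl⟩)
  · refine real_biSup_eq _ _ (fun k => sq_nonneg _) _ (sq_nonneg _) ?_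
      (Or.inl ⟨i, Finset.mem_insert_self _ _, rfl⟩)
    intro k hk
    rcases Finset.mem_insert.1 hk with rfl | hk
    · exact le_refl _
    · rw [hut k ℓ (lt_of_le_of_lt (not_lt.1 h) (Finset.mem_Ioi.1 hk))]
      simpa using sq_nonneg (A i ℓ)

include hnn hdiag hut in
lemma supIoi (j ℓ : Fin (n+1)) :
    (⨆ k ∈ Finset.Ioi j, (A k ℓ)^2) = if j < ℓ then (A ℓ ℓ)^2 else 0 := by
  split_ifs with h
  · exact real_biSup_eq _ _ (fun k => sq_nonneg _) _ (sq_nonneg _)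
      (fun k _ => sq_le_diag hnn hdiag k ℓ)
      (Or.inl ⟨ℓ, Finset.mem_Ioi.2 h, rfl⟩)
  · refine real_biSup_eq _ _ (fun k => sq_nonneg _) _ le_rfl ?_ (Or.inr rfl)
    intro k hk
    rw [hut k ℓ (lt_of_le_of_lt (not_lt.1 h) (Finset.mem_Ioi.1 hk))]
    simp

include hnn hdiag hut in
lemma supInsIci {i j : Fin (n+1)} (hij : i ≤ j) (ℓ : Fin (n+1)) :
    (⨆ k ∈ insert i (Finset.Ici j), (A k ℓ)^2)
      = if j ≤ ℓ then (A ℓ ℓ)^2 else (A i ℓ)^2 := by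
  split_ifs with h
  · exact real_biSup_eq _ _ (fun k => sq_nonneg _) _ (sq_nonneg _)
      (fun k _ => sq_le_diag hnn hdiag k ℓ)
      (Or.inl ⟨ℓ, Finset.mem_insert_of_mem (Finset.mem_Ici.2 h), rfl⟩)
  · refine real_biSup_eq _ _ (fun k => sq_nonneg _) _ (sq_nonneg _) ?_
      (Or.inl ⟨i, Finset.mem_insert_self _ _, rfl⟩)
    intro k hk
    rcases Finset.mem_insert.1 hk with rfl | hk
    · exact le_refl _
    · rw [hut k ℓ (lt_of_lt_of_le (not_le.1 h) (Finset.mem_Ici.1 hk))]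
      simpa using sq_nonneg (A i ℓ)

include hnn hdiag hut in
lemma supIci (j ℓ : Fin (n+1)) :
    (⨆ k ∈ Finset.Ici j, (A k ℓ)^2) = if j ≤ ℓ then (A ℓ ℓ)^2 else 0 := by
  split_ifs with h
  · exact real_biSup_eq _ _ (fun k => sq_nonneg _) _ (sq_nonneg _)
      (fun k _ => sq_le_diag hnn hdiag k ℓ)
      (Or.inl ⟨ℓ, Finset.mem_Ici.2 h, rfl⟩)
  · refine real_biSup_eq _ _ (fun k => sq_nonneg _) _ le_rfl ?_ (Or.inr rfl)
    intro k hk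
    rw [hut k ℓ (lt_of_lt_of_le (not_le.1 h) (Finset.mem_Ici.1 hk))]
    simp

theorem squared_coefficients_linear_in_scalings {n : ℕ}
    (A : Fin (n + 1) → Fin (n + 1) → ℝ)
    (hnn : ∀ i j, 0 ≤ A i j)
    (hrow : ∀ i, ∑ j, (A i j) ^ 2 = 1)
    (hdiag : ∀ ℓ k, k ≠ ℓ → A k ℓ < A ℓ ℓ)
    (hut : ∀ i j : Fin (n + 1), j < i → A i j = 0) :
    (∀ i j : Fin (n + 1), i < j → j < Fin.last n →
        (A i j) ^ 2 =
          ((∑ ℓ, ⨆ k ∈ insert i (Finset.Ioi j), (A k ℓ) ^ 2)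
            - (∑ ℓ, ⨆ k ∈ Finset.Ioi j, (A k ℓ) ^ 2))
          - ((∑ ℓ, ⨆ k ∈ insert i (Finset.Ici j), (A k ℓ) ^ 2)
            - (∑ ℓ, ⨆ k ∈ Finset.Ici j, (A k ℓ) ^ 2)))
    ∧ (∃ T : {p : Fin (n + 1) × Fin (n + 1) // p.1 ≤ p.2} →
            {p : Fin (n + 1) × Fin (n + 1) // p.1 ≤ p.2} → ℝ,
        (∀ p q, T p q = -1 ∨ T p q = 0 ∨ T p q = 1)
        ∧ ∀ p : {p : Fin (n + 1) × Fin (n + 1) // p.1 ≤ p.2},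
            (A p.val.1 p.val.2) ^ 2 =
              ∑ q : {p : Fin (n + 1) × Fin (n + 1) // p.1 ≤ p.2},
                T p q * (∑ ℓ, ⨆ k ∈ insert q.val.1 (Finset.Ioi q.val.2), (A k ℓ) ^ 2)) := by
  constructor
  · intro i j hij hjl
    simp only [supIns hnn hdiag hut hij.le, supIoi hnn hdiag hut,
      supInsIci hnn hdiag hut hij.le, supIci hnn hdiag hut]
    rw [← Finset.sum_sub_distrib, ← Finset.sum_sub_distrib, ← Finset.sum_sub_distrib]
    rw [Finset.sum_eq_single_of_mem j (Finset.mem_univ j) ?_]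
    · simp
    · intro b _ hbj
      rcases lt_trichotomy j b with h | h | h
      · simp [h, le_of_lt h]
      · exact absurd h.symm hbj
      · simp [not_lt.2 h.le, not_le.2 h]
  · -- part 2
    have hS : ∀ a b : Fin (n+1), a ≤ b →
        (∑ ℓ, ⨆ k ∈ insert a (Finset.Ioi b), (A k ℓ)^2)
          = ∑ ℓ, if b < ℓ then (A ℓ ℓ)^2 else (A a ℓ)^2 :=
      fun a b hab => Finset.sum_congr rfl (fun ℓ _ => supIns hnn hdiag hut hab ℓ)
    have hdd : (A (Fin.last n) (Fin.last n))^2 = 1 := by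
      have h := hrow (Fin.last n)
      rw [Finset.sum_eq_single_of_mem (Fin.last n) (Finset.mem_univ _) ?_] at h
      · exact h
      · intro b _ hb
        rw [hut (Fin.last n) b (lt_of_le_of_ne (Fin.le_last b) hb)]
        simp
    refine ⟨fun p q =>
      if p.val.1 = p.val.2 then
        (if p.val.2 = Fin.last n then (if q.val = p.val then (1:ℝ) else 0)
         else if q.val = p.val then 1
         else if q.val = (p.val.1 + 1, p.val.1 + 1) then -1 else 0)
      else if p.val.2 = Fin.last n then
        (if q.val = p.val then 1
         else if q.val = (p.val.1, p.val.2 - 1) then -1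
         else if q.val = (p.val.2, p.val.2) then 1 else 0)
      else
        (if q.val = p.val then 1
         else if q.val = (p.val.1, p.val.2 - 1) then -1
         else if q.val = (p.val.2, p.val.2) then 1
         else if q.val = (p.val.2 + 1, p.val.2 + 1) then -1 else 0),
      fun p q => by dsimp only; split_ifs <;> simp, ?_⟩
    rintro ⟨⟨i, j⟩, hij⟩
    have hijv : i.val ≤ j.val := hij
    dsimp only
    by_cases hd : i = j
    · subst hd
      by_cases hl : i = Fin.last n
      · subst hl
        simp only [eq_self_iff_true, if_true]
        have key : ∀ q : {p : Fin (n+1) × Fin (n+1) // p.1 ≤ p.2},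
            ((if q.val = ((Fin.last n, Fin.last n) : Fin (n+1) × Fin (n+1)) then (1:ℝ) else 0) *
              ∑ ℓ, ⨆ k ∈ insert q.val.1 (Finset.Ioi q.val.2), (A k ℓ)^2)
            = if q = ⟨(Fin.last n, Fin.last n), le_rfl⟩ then
                (∑ ℓ, ⨆ k ∈ insert (Fin.last n) (Finset.Ioi (Fin.last n)), (A k ℓ)^2) else 0 := by
          intro q
          by_cases h : q = ⟨(Fin.last n, Fin.last n), le_rfl⟩
          · subst h; simp
          · rw [if_neg (fun hv => h (Subtype.ext hv)), if_neg h, zero_mul]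
        rw [Finset.sum_congr rfl (fun q _ => key q)]
        simp only [Finset.sum_ite_eq', Finset.mem_univ, if_true]
        rw [hS _ _ le_rfl]
        rw [Finset.sum_congr rfl (fun ℓ _ => if_neg (not_lt.2 (Fin.le_last ℓ))), hrow]
        exact hdd
      · simp only [eq_self_iff_true, if_true, hl, if_false]
        have hilt : i < Fin.last n := lt_of_le_of_ne (Fin.le_last i) hl
        have hisv : ((i+1 : Fin (n+1))).val = i.val + 1 := Fin.val_add_one_of_lt hilt
        have hne : (i + 1 : Fin (n+1)) ≠ i := fun h => by
          have := congrArg Fin.val h; omega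
        have key : ∀ q : {p : Fin (n+1) × Fin (n+1) // p.1 ≤ p.2},
            ((if q.val = ((i,i) : Fin (n+1) × Fin (n+1)) then (1:ℝ)
              else if q.val = (i+1,i+1) then -1 else 0) *
              ∑ ℓ, ⨆ k ∈ insert q.val.1 (Finset.Ioi q.val.2), (A k ℓ)^2)
            = (if q = ⟨(i,i), le_rfl⟩ then
                 (∑ ℓ, ⨆ k ∈ insert i (Finset.Ioi i), (A k ℓ)^2) else 0)
              + (if q = ⟨(i+1,i+1), le_rfl⟩ then
                 -(∑ ℓ, ⨆ k ∈ insert (i+1) (Finset.Ioi (i+1)), (A k ℓ)^2) else 0) := by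
          intro q
          by_cases h1 : q = ⟨(i,i), le_rfl⟩
          · subst h1; simp [Subtype.ext_iff, Prod.ext_iff, Ne.symm hne]
          · by_cases h2 : q = ⟨(i+1,i+1), le_rfl⟩
            · subst h2; simp [Subtype.ext_iff, Prod.ext_iff, hne]
            · have hv1 : ¬ q.val = (i,i) := fun hv => h1 (Subtype.ext hv)
              have hv2 : ¬ q.val = (i+1,i+1) := fun hv => h2 (Subtype.ext hv)
              rw [if_neg hv1, if_neg hv2, zero_mul, if_neg h1, if_neg h2, add_zero]
        rw [Finset.sum_congr rfl (fun q _ => key q), Finset.sum_add_distrib]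
        simp only [Finset.sum_ite_eq', Finset.mem_univ, if_true]
        rw [hS i i le_rfl, hS (i+1) (i+1) le_rfl, ← sub_eq_add_neg,
          ← Finset.sum_sub_distrib]
        rw [Finset.sum_eq_single_of_mem i (Finset.mem_univ i) ?_]
        · have c2 : ¬ (i+1 : Fin (n+1)) < i := by rw [Fin.lt_def]; omega
          have c3 : i < i + 1 := by rw [Fin.lt_def]; omega
          rw [if_neg (lt_irrefl i), if_neg c2, hut (i+1) i c3]; ring
        · intro b _ hbi
          have hbvi : b.val ≠ i.val := fun h => hbi (Fin.ext h)
          by_cases hb1 : i.val + 1 < b.val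
          · have c1 : i < b := by rw [Fin.lt_def]; omega
            have c2 : i + 1 < b := by rw [Fin.lt_def]; omega
            rw [if_pos c1, if_pos c2, sub_self]
          · by_cases hb2 : b.val = i.val + 1
            · have hbis : b = i + 1 := Fin.ext (by omega)
              have c1 : i < b := by rw [Fin.lt_def]; omega
              have c2 : ¬ i + 1 < b := by rw [Fin.lt_def]; omega
              rw [if_pos c1, if_neg c2, hbis, sub_self]
            · have c1 : ¬ i < b := by rw [Fin.lt_def]; omega
              have c2 : ¬ i + 1 < b := by rw [Fin.lt_def]; omega
              have d1 : b < i := by rw [Fin.lt_def]; omega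
              have d2 : b < i + 1 := by rw [Fin.lt_def]; omega
              rw [if_neg c1, if_neg c2, hut i b d1, hut (i+1) b d2, sub_self]
    · by_cases hl : j = Fin.last n
      · subst hl
        simp only [hd, if_false, eq_self_iff_true, if_true]
        have hlastv : ((Fin.last n : Fin (n+1))).val = n := rfl
        have hivn : i.val ≠ n := fun h => hd (Fin.ext (by rw [h, hlastv]))
        have hiv : i.val < n := by have := i.isLt; omega
        have h0 : (Fin.last n) ≠ 0 := fun h => by
          have := congrArg Fin.val h; rw [hlastv] at this; simp at this; omega
        have hl'v : ((Fin.last n - 1 : Fin (n+1))).val = n - 1 := by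
          rw [Fin.coe_sub_one, if_neg h0, hlastv]
        have hil' : i ≤ Fin.last n - 1 := by rw [Fin.le_def]; omega
        have hne1 : ((Fin.last n - 1 : Fin (n+1))) ≠ Fin.last n := fun h => by
          have := congrArg Fin.val h; omega
        have hne2 : (Fin.last n) ≠ i := fun h => hd h.symm
        have key : ∀ q : {p : Fin (n+1) × Fin (n+1) // p.1 ≤ p.2},
            ((if q.val = ((i, Fin.last n) : Fin (n+1) × Fin (n+1)) then (1:ℝ)
              else if q.val = (i, Fin.last n - 1) then -1
              else if q.val = (Fin.last n, Fin.last n) then 1 else 0) *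
              ∑ ℓ, ⨆ k ∈ insert q.val.1 (Finset.Ioi q.val.2), (A k ℓ)^2)
            = (if q = ⟨(i, Fin.last n), Fin.le_last i⟩ then
                 (∑ ℓ, ⨆ k ∈ insert i (Finset.Ioi (Fin.last n)), (A k ℓ)^2) else 0)
              + (if q = ⟨(i, Fin.last n - 1), hil'⟩ then
                 -(∑ ℓ, ⨆ k ∈ insert i (Finset.Ioi (Fin.last n - 1)), (A k ℓ)^2) else 0)
              + (if q = ⟨(Fin.last n, Fin.last n), le_rfl⟩ then
                 (∑ ℓ, ⨆ k ∈ insert (Fin.last n) (Finset.Ioi (Fin.last n)), (A k ℓ)^2) else 0) := by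
          intro q
          by_cases h1 : q = ⟨(i, Fin.last n), Fin.le_last i⟩
          · subst h1; simp [Subtype.ext_iff, Prod.ext_iff, hd, Ne.symm hd, hne1, Ne.symm hne1]
          · by_cases h2 : q = ⟨(i, Fin.last n - 1), hil'⟩
            · subst h2; simp [Subtype.ext_iff, Prod.ext_iff, hd, Ne.symm hd, hne1, Ne.symm hne1]
            · by_cases h3 : q = ⟨(Fin.last n, Fin.last n), le_rfl⟩
              · subst h3; simp [Subtype.ext_iff, Prod.ext_iff, hd, Ne.symm hd, hne1, Ne.symm hne1, hne2]
              · have hv1 : ¬ q.val = (i, Fin.last n) := fun hv => h1 (Subtype.ext hv)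
                have hv2 : ¬ q.val = (i, Fin.last n - 1) := fun hv => h2 (Subtype.ext hv)
                have hv3 : ¬ q.val = (Fin.last n, Fin.last n) := fun hv => h3 (Subtype.ext hv)
                rw [if_neg hv1, if_neg hv2, if_neg hv3, zero_mul,
                  if_neg h1, if_neg h2, if_neg h3, add_zero, add_zero]
        rw [Finset.sum_congr rfl (fun q _ => key q), Finset.sum_add_distrib,
          Finset.sum_add_distrib]
        simp only [Finset.sum_ite_eq', Finset.mem_univ, if_true]
        rw [hS i (Fin.last n) (Fin.le_last i), hS i (Fin.last n - 1) hil',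
          hS (Fin.last n) (Fin.last n) le_rfl]
        have e1 : (∑ ℓ, if Fin.last n < ℓ then (A ℓ ℓ)^2 else (A i ℓ)^2) = 1 := by
          rw [Finset.sum_congr rfl (fun ℓ _ => if_neg (not_lt.2 (Fin.le_last ℓ))), hrow]
        have e3 : (∑ ℓ, if Fin.last n < ℓ then (A ℓ ℓ)^2 else (A (Fin.last n) ℓ)^2) = 1 := by
          rw [Finset.sum_congr rfl (fun ℓ _ => if_neg (not_lt.2 (Fin.le_last ℓ))), hrow]
        have e2 : (∑ ℓ, if (Fin.last n - 1 : Fin (n+1)) < ℓ then (A ℓ ℓ)^2 else (A i ℓ)^2)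
            = 1 + (1 - (A i (Fin.last n))^2) := by
          have step : ∀ ℓ, (if (Fin.last n - 1 : Fin (n+1)) < ℓ then (A ℓ ℓ)^2 else (A i ℓ)^2)
              = (A i ℓ)^2 + (if ℓ = Fin.last n then 1 - (A i (Fin.last n))^2 else 0) := by
            intro ℓ
            by_cases hℓ : ℓ = Fin.last n
            · subst hℓ
              rw [if_pos (by rw [Fin.lt_def]; omega), if_pos rfl, hdd]; ring
            · have hlvn : ℓ.val ≠ n := fun h => hℓ (Fin.ext (by rw [h, hlastv]))
              have hlt : ¬ (Fin.last n - 1 : Fin (n+1)) < ℓ := by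
                rw [Fin.lt_def]; have := ℓ.isLt; omega
              rw [if_neg hlt, if_neg hℓ, add_zero]
          rw [Finset.sum_congr rfl (fun ℓ _ => step ℓ), Finset.sum_add_distrib, hrow,
            Finset.sum_ite_eq', if_pos (Finset.mem_univ _)]
        rw [e1, e2, e3]; ring
      · simp only [hd, if_false, hl, if_false]
        have hvij : i.val < j.val := by
          have : i.val ≠ j.val := fun h => hd (Fin.ext h); omega
        have hjvn : j.val ≠ n := fun h => hl (Fin.ext (by rw [h]; rfl))
        have hjv : j.val < n := by have := j.isLt; omega
        have hj0 : j ≠ 0 := fun h => by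
          have := congrArg Fin.val h; rw [Fin.val_zero] at this; omega
        have hj'v : ((j - 1 : Fin (n+1))).val = j.val - 1 := by
          rw [Fin.coe_sub_one, if_neg hj0]
        have hjsv : ((j + 1 : Fin (n+1))).val = j.val + 1 :=
          Fin.val_add_one_of_lt (by rw [Fin.lt_def]; exact hjv)
        have hij' : i ≤ j - 1 := by rw [Fin.le_def]; omega
        have e1 : (j - 1 : Fin (n+1)) ≠ j := fun h => by
          have := congrArg Fin.val h; omega
        have e2 : (j + 1 : Fin (n+1)) ≠ i := fun h => by
          have := congrArg Fin.val h; omega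
        have e3 : (j + 1 : Fin (n+1)) ≠ j := fun h => by
          have := congrArg Fin.val h; omega
        have key : ∀ q : {p : Fin (n+1) × Fin (n+1) // p.1 ≤ p.2},
            ((if q.val = ((i, j) : Fin (n+1) × Fin (n+1)) then (1:ℝ)
              else if q.val = (i, j - 1) then -1
              else if q.val = (j, j) then 1
              else if q.val = (j + 1, j + 1) then -1 else 0) *
              ∑ ℓ, ⨆ k ∈ insert q.val.1 (Finset.Ioi q.val.2), (A k ℓ)^2)
            = (if q = ⟨(i, j), hij⟩ then
                 (∑ ℓ, ⨆ k ∈ insert i (Finset.Ioi j), (A k ℓ)^2) else 0)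
              + (if q = ⟨(i, j - 1), hij'⟩ then
                 -(∑ ℓ, ⨆ k ∈ insert i (Finset.Ioi (j - 1)), (A k ℓ)^2) else 0)
              + (if q = ⟨(j, j), le_rfl⟩ then
                 (∑ ℓ, ⨆ k ∈ insert j (Finset.Ioi j), (A k ℓ)^2) else 0)
              + (if q = ⟨(j + 1, j + 1), le_rfl⟩ then
                 -(∑ ℓ, ⨆ k ∈ insert (j + 1) (Finset.Ioi (j + 1)), (A k ℓ)^2) else 0) := by
          intro q
          by_cases h1 : q = ⟨(i, j), hij⟩
          · subst h1
            simp [Subtype.ext_iff, Prod.ext_iff, hd, Ne.symm hd, e1, Ne.symm e1, e2, Ne.symm e2, e3, Ne.symm e3]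
          · by_cases h2 : q = ⟨(i, j - 1), hij'⟩
            · subst h2
              simp [Subtype.ext_iff, Prod.ext_iff, hd, Ne.symm hd, e1, Ne.symm e1, e2, Ne.symm e2, e3, Ne.symm e3]
            · by_cases h3 : q = ⟨(j, j), le_rfl⟩
              · subst h3
                simp [Subtype.ext_iff, Prod.ext_iff, hd, Ne.symm hd, e1, Ne.symm e1, e2, Ne.symm e2, e3, Ne.symm e3]
              · by_cases h4 : q = ⟨(j + 1, j + 1), le_rfl⟩
                · subst h4
                  simp [Subtype.ext_iff, Prod.ext_iff, hd, Ne.symm hd, e1, Ne.symm e1, e2, Ne.symm e2, e3, Ne.symm e3]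
                · have hv1 : ¬ q.val = (i, j) := fun hv => h1 (Subtype.ext hv)
                  have hv2 : ¬ q.val = (i, j - 1) := fun hv => h2 (Subtype.ext hv)
                  have hv3 : ¬ q.val = (j, j) := fun hv => h3 (Subtype.ext hv)
                  have hv4 : ¬ q.val = (j + 1, j + 1) := fun hv => h4 (Subtype.ext hv)
                  rw [if_neg hv1, if_neg hv2, if_neg hv3, if_neg hv4, zero_mul,
                    if_neg h1, if_neg h2, if_neg h3, if_neg h4,
                    add_zero, add_zero, add_zero]
        rw [Finset.sum_congr rfl (fun q _ => key q), Finset.sum_add_distrib,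
          Finset.sum_add_distrib, Finset.sum_add_distrib]
        simp only [Finset.sum_ite_eq', Finset.mem_univ, if_true]
        rw [hS i j hij, hS i (j - 1) hij', hS j j le_rfl, hS (j + 1) (j + 1) le_rfl,
          ← sub_eq_add_neg, ← sub_eq_add_neg, ← Finset.sum_sub_distrib,
          ← Finset.sum_add_distrib, ← Finset.sum_sub_distrib]
        rw [Finset.sum_eq_single_of_mem j (Finset.mem_univ j) ?_]
        · have c2 : (j - 1 : Fin (n+1)) < j := by rw [Fin.lt_def]; omega
          have c4 : ¬ (j + 1 : Fin (n+1)) < j := by rw [Fin.lt_def]; omega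
          have d4 : j < j + 1 := by rw [Fin.lt_def]; omega
          rw [if_neg (lt_irrefl j), if_pos c2, if_neg (lt_irrefl j), if_neg c4,
            hut (j + 1) j d4]
          ring
        · intro b _ hbj
          have hbvj : b.val ≠ j.val := fun h => hbj (Fin.ext h)
          by_cases hb1 : j.val + 1 < b.val
          · have c1 : j < b := by rw [Fin.lt_def]; omega
            have c2 : (j - 1 : Fin (n+1)) < b := by rw [Fin.lt_def]; omega
            have c4 : (j + 1 : Fin (n+1)) < b := by rw [Fin.lt_def]; omega
            rw [if_pos c1, if_pos c2, if_pos c1, if_pos c4]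
            ring
          · by_cases hb2 : b.val = j.val + 1
            · have hbjs : b = j + 1 := Fin.ext (by omega)
              have c1 : j < b := by rw [Fin.lt_def]; omega
              have c2 : (j - 1 : Fin (n+1)) < b := by rw [Fin.lt_def]; omega
              have c4 : ¬ (j + 1 : Fin (n+1)) < b := by rw [Fin.lt_def]; omega
              rw [if_pos c1, if_pos c2, if_pos c1, if_neg c4, hbjs]
              ring
            · have c1 : ¬ j < b := by rw [Fin.lt_def]; omega
              have c2 : ¬ (j - 1 : Fin (n+1)) < b := by rw [Fin.lt_def]; omega
              have c4 : ¬ (j + 1 : Fin (n+1)) < b := by rw [Fin.lt_def]; omega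
              have d3 : b < j := by rw [Fin.lt_def]; omega
              have d4 : b < j + 1 := by rw [Fin.lt_def]; omega
              rw [if_neg c1, if_neg c2, if_neg c1, if_neg c4,
                hut j b d3, hut (j + 1) b d4]
              ring
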